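/- arXiv:2008.01153 — 3 statements merged into one kernel-verified Lean document; each statement's English description precedes it below -/
import Mathlib

section
/- Let G be a connected d-regular finite simple graph with adjacency matrix A, and let λ_2 be the second largest eigenvalue of A. Then the expansion ratio satisfies h(G) ≥ (d - λ_2)/2. -/
/-- The number of ordered pairs `(u,v) ∈ S × T` with `{u,v}` an edge of `G`. -/
def eCount {n : ℕ} (G : SimpleGraph (Fin n)) [DecidableRel G.Adj]
    (S T : Finset (Fin n)) : ℕ :=
  ((S ×ˢ T).filter fun p => G.Adj p.1 p.2).card

/-- `lam` is the second largest eigenvalue of the symmetric matrix `A` of a `d`-regular graph: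
it is the largest eigenvalue attained by an eigenvector orthogonal to the all-ones vector. -/
def IsSecondLargestEig {n : ℕ} (A : Matrix (Fin n) (Fin n) ℝ) (lam : ℝ) : Prop :=
  (∃ v : Fin n → ℝ, v ≠ 0 ∧ (∑ i, v i) = 0 ∧ A.mulVec v = lam • v) ∧
    ∀ (μ : ℝ) (v : Fin n → ℝ), v ≠ 0 → (∑ i, v i) = 0 → A.mulVec v = μ • v → μ ≤ lam

open Finset Matrix SimpleGraph

section Aux

variable {n d : ℕ} (G : SimpleGraph (Fin n)) [DecidableRel G.Adj]

lemma col_sum_adj (hreg : G.IsRegularOfDegree d) (j : Fin n) :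
    ∑ i, (if G.Adj i j then (1:ℝ) else 0) = d := by
  rw [Finset.sum_boole]
  have : Finset.univ.filter (fun i => G.Adj i j) = G.neighborFinset j := by
    ext x; simp [SimpleGraph.adj_comm]
  rw [this]
  exact_mod_cast congrArg Nat.cast (hreg j)

lemma sum_mulVec_adj (hreg : G.IsRegularOfDegree d) (w : Fin n → ℝ) :
    ∑ i, ((G.adjMatrix ℝ) *ᵥ w) i = d * ∑ i, w i := by
  simp only [Matrix.mulVec, dotProduct, SimpleGraph.adjMatrix_apply]
  rw [Finset.sum_comm, Finset.mul_sum]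
  refine Finset.sum_congr rfl fun j _ => ?_
  rw [← Finset.sum_mul, col_sum_adj G hreg j]

lemma adj_isHermitian : ((G.adjMatrix ℝ)).IsHermitian := by
  have h := G.isSymm_adjMatrix (α := ℝ)
  rw [Matrix.IsHermitian]
  ext i j
  simp only [Matrix.conjTranspose_apply, starRingEnd_apply, star_trivial]
  exact congrFun (congrFun h i) j

/-- Rayleigh bound: if `lam2 < d`, every vector with zero sum has quadratic form at most
`lam2` times its norm squared. -/
lemma rayleigh_bound (hreg : G.IsRegularOfDegree d) (lam2 : ℝ)
    (hlam2 : IsSecondLargestEig (G.adjMatrix ℝ) lam2) (hld : lam2 < d)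
    (v : Fin n → ℝ) (hv : ∑ i, v i = 0) :
    v ⬝ᵥ ((G.adjMatrix ℝ) *ᵥ v) ≤ lam2 * (v ⬝ᵥ v) := by
  classical
  have hA : ((G.adjMatrix ℝ)).IsHermitian := adj_isHermitian G
  set B := hA.eigenvectorBasis with hB
  set μ := hA.eigenvalues with hμ
  set V : EuclideanSpace ℝ (Fin n) := WithLp.toLp 2 v with hVdef
  set c : Fin n → ℝ := fun i => inner (𝕜 := ℝ) (B i) V with hc
  -- dead or bounded indices
  have claim1 : ∀ i, μ i ≤ lam2 ∨ c i = 0 := by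
    intro i
    by_cases hμi : μ i ≤ lam2
    · exact Or.inl hμi
    right
    push_neg at hμi
    set u : Fin n → ℝ := ⇑(B i) with hu
    have heig : (G.adjMatrix ℝ) *ᵥ u = μ i • u := hA.mulVec_eigenvectorBasis i
    have hune : u ≠ 0 := by
      have := B.orthonormal.ne_zero i
      intro h
      apply this
      ext j
      exact congrFun h j
    set σ : ℝ := ∑ j, u j with hσ
    have hσne : σ ≠ 0 := by
      intro h0
      exact absurd (hlam2.2 (μ i) u hune h0 heig) (not_le.mpr hμi)
    have hsum : μ i * σ = d * σ := by
      have h1 := sum_mulVec_adj G hreg u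
      rw [heig] at h1
      calc μ i * σ = ∑ j, (μ i • u) j := by simp [hσ, Finset.mul_sum]
        _ = d * σ := h1
    have hμd : μ i = (d : ℝ) := mul_right_cancel₀ hσne hsum
    have hn0 : (n : ℝ) ≠ 0 := by
      have : 0 < n := Fin.pos i
      positivity
    -- z = n • u - σ • 1 is a zero-sum eigenvector with eigenvalue d, so it is zero
    set z : Fin n → ℝ := fun j => (n : ℝ) * u j - σ with hz
    have hzsum : ∑ j, z j = 0 := by
      simp [hz, Finset.sum_sub_distrib, ← Finset.mul_sum, ← hσ, mul_comm]
    have hAone : (G.adjMatrix ℝ) *ᵥ (fun _ => (1:ℝ)) = fun _ => (d:ℝ) := by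
      funext j
      simp only [Matrix.mulVec, dotProduct, SimpleGraph.adjMatrix_apply, mul_one]
      have : ∑ i, (if G.Adj j i then (1:ℝ) else 0) = d := by
        rw [Finset.sum_boole]
        have : Finset.univ.filter (fun i => G.Adj j i) = G.neighborFinset j := by
          ext x; simp
        rw [this]
        exact_mod_cast congrArg Nat.cast (hreg j)
      exact this
    have hzeig : (G.adjMatrix ℝ) *ᵥ z = (d : ℝ) • z := by
      have hzdec : z = (n : ℝ) • u - σ • (fun _ => (1:ℝ)) := by
        funext j; simp [hz, mul_comm]
      rw [hzdec, Matrix.mulVec_sub, Matrix.mulVec_smul, Matrix.mulVec_smul, heig, hμd, hAone]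
      funext j
      simp [hz]
      ring
    have hz0 : z = 0 := by
      by_contra hzne
      exact absurd (hlam2.2 (d : ℝ) z hzne hzsum hzeig) (not_le.mpr hld)
    have huconst : ∀ j, u j = σ / n := by
      intro j
      have h := congrFun hz0 j
      simp only [hz, Pi.zero_apply] at h
      rw [eq_div_iff hn0]
      linarith [h]
    -- now c i = (σ/n) * ∑ v = 0
    have : c i = (σ / n) * ∑ j, v j := by
      rw [hc]
      simp only [PiLp.inner_apply, RCLike.inner_apply, conj_trivial]
      rw [Finset.mul_sum]
      refine Finset.sum_congr rfl fun j _ => ?_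
      have : (B i) j = u j := rfl
      rw [this, huconst j]
      exact mul_comm _ _
    rw [this, hv, mul_zero]
  -- decomposition
  have hVrepr : ∀ j, v j = ∑ i, c i * (B i) j := by
    have h := B.sum_repr' V
    have h2 := congrArg (WithLp.linearEquiv 2 ℝ (∀ _ : Fin n, ℝ)) h
    rw [map_sum] at h2
    intro j
    have h3 := congrFun h2 j
    simp only [_root_.map_smul, WithLp.linearEquiv_apply, WithLp.ofLp_toLp, Finset.sum_apply,
      Pi.smul_apply, smul_eq_mul] at h3
    exact h3.symm
  have hdotB : ∀ i, ∑ k, v k * (B i) k = c i := by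
    intro i
    rw [hc]
    simp only [PiLp.inner_apply, RCLike.inner_apply, conj_trivial]
    exact Finset.sum_congr rfl fun j _ => rfl
  have hAv : ∀ k, ((G.adjMatrix ℝ) *ᵥ v) k = ∑ i, c i * (μ i * (B i) k) := by
    intro k
    have heigk : ∀ i, ∑ j, (G.adjMatrix ℝ) k j * (B i) j = μ i * (B i) k := by
      intro i
      have h := congrFun (hA.mulVec_eigenvectorBasis i) k
      simpa [Matrix.mulVec, dotProduct, WithLp.ofLp_toLp] using h
    simp only [Matrix.mulVec, dotProduct]
    calc ∑ j, (G.adjMatrix ℝ) k j * v j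
        = ∑ j, ∑ i, c i * ((G.adjMatrix ℝ) k j * (B i) j) := by
          refine Finset.sum_congr rfl fun j _ => ?_
          rw [hVrepr j, Finset.mul_sum]
          exact Finset.sum_congr rfl fun i _ => by ring
      _ = ∑ i, ∑ j, c i * ((G.adjMatrix ℝ) k j * (B i) j) := Finset.sum_comm
      _ = ∑ i, c i * (μ i * (B i) k) := by
          refine Finset.sum_congr rfl fun i _ => ?_
          rw [← Finset.mul_sum, heigk i]
  have hQ : v ⬝ᵥ ((G.adjMatrix ℝ) *ᵥ v) = ∑ i, μ i * c i ^ 2 := by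
    simp only [dotProduct]
    calc ∑ k, v k * ((G.adjMatrix ℝ) *ᵥ v) k
        = ∑ k, ∑ i, c i * μ i * (v k * (B i) k) := by
          refine Finset.sum_congr rfl fun k _ => ?_
          rw [hAv k, Finset.mul_sum]
          exact Finset.sum_congr rfl fun i _ => by ring
      _ = ∑ i, ∑ k, c i * μ i * (v k * (B i) k) := Finset.sum_comm
      _ = ∑ i, μ i * c i ^ 2 := by
          refine Finset.sum_congr rfl fun i _ => ?_
          rw [← Finset.mul_sum, hdotB i]
          ring
  have hN : v ⬝ᵥ v = ∑ i, c i ^ 2 := by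
    simp only [dotProduct]
    calc ∑ k, v k * v k
        = ∑ k, ∑ i, c i * (v k * (B i) k) := by
          refine Finset.sum_congr rfl fun k _ => ?_
          conv_lhs => rw [show v k * v k = v k * ∑ i, c i * (B i) k by rw [← hVrepr k]]
          rw [Finset.mul_sum]
          exact Finset.sum_congr rfl fun i _ => by ring
      _ = ∑ i, ∑ k, c i * (v k * (B i) k) := Finset.sum_comm
      _ = ∑ i, c i ^ 2 := by
          refine Finset.sum_congr rfl fun i _ => ?_
          rw [← Finset.mul_sum, hdotB i]
          ring
  rw [hQ, hN, Finset.mul_sum]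
  refine Finset.sum_le_sum fun i _ => ?_
  rcases claim1 i with h | h
  · exact mul_le_mul_of_nonneg_right h (sq_nonneg _)
  · simp [h]

end Aux

/-- for a connected `d`-regular finite simple graph `G` with second largest
adjacency eigenvalue `λ₂`, the expansion ratio satisfies `h(G) ≥ (d - λ₂)/2`, i.e. every
nonempty vertex set `S` with `|S| ≤ n/2` satisfies `|∂S|/|S| ≥ (d - λ₂)/2`. -/
theorem stmt3 (n d : ℕ) (G : SimpleGraph (Fin n)) [DecidableRel G.Adj]
    (hconn : G.Connected) (hreg : G.IsRegularOfDegree d)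
    (lam2 : ℝ) (hlam2 : IsSecondLargestEig (G.adjMatrix ℝ) lam2) :
    ∀ S : Finset (Fin n), S.Nonempty → (S.card : ℝ) ≤ n / 2 →
      ((d : ℝ) - lam2) / 2 ≤ (eCount G S Sᶜ : ℝ) / S.card := by
  classical
  intro S hSne hShalf
  set s : ℝ := (S.card : ℝ) with hs
  have hspos : 0 < s := by rw [hs]; exact_mod_cast Finset.card_pos.mpr hSne
  have hE0 : (0:ℝ) ≤ (eCount G S Sᶜ : ℝ) := Nat.cast_nonneg _
  by_cases hld : lam2 < d
  swap
  · push_neg at hld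
    have : ((d:ℝ) - lam2) / 2 ≤ 0 := by linarith
    exact this.trans (div_nonneg hE0 hspos.le)
  -- main case
  set t : ℝ := (Sᶜ.card : ℝ) with ht
  have hst : s + t = n := by
    rw [hs, ht, ← Nat.cast_add]
    norm_cast
    rw [Finset.card_add_card_compl]
    simp
  have hnpos : (0:ℝ) < n := by
    rcases hSne with ⟨x, _⟩
    exact_mod_cast Fin.pos x
  -- the test vector
  set v : Fin n → ℝ := fun u => if u ∈ S then t else -s with hv
  have hvS : ∀ i ∈ S, v i = t := fun i hi => by simp [hv, hi]
  have hvSc : ∀ i ∈ Sᶜ, v i = -s := fun i hi => by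
    simp only [hv]; rw [if_neg (Finset.mem_compl.mp hi)]
  have hvsum : ∑ i, v i = 0 := by
    rw [← Finset.sum_add_sum_compl S]
    have h1 : ∑ i ∈ S, v i = s * t := by
      rw [Finset.sum_congr rfl hvS, Finset.sum_const, hs]
      simp [mul_comm]
    have h2 : ∑ i ∈ Sᶜ, v i = t * (-s) := by
      rw [Finset.sum_congr rfl hvSc, Finset.sum_const, ht]
      simp [mul_comm]
    rw [h1, h2]; ring
  -- block counts
  set N : Finset (Fin n) → Finset (Fin n) → ℝ :=
    fun S T => ∑ i ∈ S, ∑ j ∈ T, (if G.Adj i j then (1:ℝ) else 0) with hNdef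
  have hN_eCount : ∀ S T : Finset (Fin n), N S T = (eCount G S T : ℝ) := by
    intro S T
    rw [eCount, Finset.card_filter]
    push_cast
    rw [Finset.sum_product]
  have hN_univ : ∀ T : Finset (Fin n), N T Finset.univ = d * T.card := by
    intro T
    rw [hNdef]
    simp only
    rw [Finset.sum_congr rfl (fun i _ => by
      have : ∑ j, (if G.Adj i j then (1:ℝ) else 0) = d := by
        rw [Finset.sum_boole]
        have : Finset.univ.filter (fun j => G.Adj i j) = G.neighborFinset i := by
          ext x; simp
        rw [this]
        exact_mod_cast congrArg Nat.cast (hreg i)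
      exact this)]
    simp [mul_comm]
  have hN_comm : ∀ A B : Finset (Fin n), N A B = N B A := by
    intro A B
    rw [hNdef]
    simp only
    rw [Finset.sum_comm]
    exact Finset.sum_congr rfl fun j _ => Finset.sum_congr rfl fun i _ => by
      simp [SimpleGraph.adj_comm]
  have hN_split : ∀ A : Finset (Fin n), N A S + N A Sᶜ = N A Finset.univ := by
    intro A
    rw [hNdef]
    simp only
    rw [← Finset.sum_add_distrib]
    exact Finset.sum_congr rfl fun i _ => Finset.sum_add_sum_compl S _
  set E : ℝ := N S Sᶜ with hEdef
  have hE : E = (eCount G S Sᶜ : ℝ) := hN_eCount S Sᶜ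
  have hSS : N S S = d * s - E := by
    have := hN_split S
    rw [hN_univ S] at this
    linarith [hEdef, hs]
  have hcc : N Sᶜ Sᶜ = d * t - E := by
    have := hN_split Sᶜ
    rw [hN_univ Sᶜ, hN_comm Sᶜ S] at this
    linarith [hEdef, ht]
  -- quadratic form identity
  have hQ : v ⬝ᵥ ((G.adjMatrix ℝ) *ᵥ v) =
      t^2 * N S S + 2 * t * (-s) * E + s^2 * N Sᶜ Sᶜ := by
    have expand : v ⬝ᵥ ((G.adjMatrix ℝ) *ᵥ v) =
        ∑ i, ∑ j, v i * ((if G.Adj i j then (1:ℝ) else 0) * v j) := by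
      simp only [dotProduct, Matrix.mulVec, SimpleGraph.adjMatrix_apply,
        Finset.mul_sum]
    rw [expand]
    rw [← Finset.sum_add_sum_compl S]
    have inner_split : ∀ (a : ℝ) (hconst : ∀ i ∈ (Finset.univ : Finset (Fin n)), True),
        True := fun _ _ => trivial
    have hblock : ∀ (A : Finset (Fin n)) (a : ℝ), (∀ i ∈ A, v i = a) →
        ∑ i ∈ A, ∑ j, v i * ((if G.Adj i j then (1:ℝ) else 0) * v j)
          = a * t * N A S + a * (-s) * N A Sᶜ := by
      intro A a hA
      have : ∀ i ∈ A, ∑ j, v i * ((if G.Adj i j then (1:ℝ) else 0) * v j)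
          = a * t * (∑ j ∈ S, (if G.Adj i j then (1:ℝ) else 0))
            + a * (-s) * (∑ j ∈ Sᶜ, (if G.Adj i j then (1:ℝ) else 0)) := by
        intro i hi
        rw [← Finset.sum_add_sum_compl S (fun j => v i * ((if G.Adj i j then (1:ℝ) else 0) * v j))]
        congr 1
        · rw [Finset.mul_sum]
          refine Finset.sum_congr rfl fun j hj => ?_
          rw [hA i hi, hv]
          simp only [if_pos (by exact hj : j ∈ S)]
          ring
        · rw [Finset.mul_sum]
          refine Finset.sum_congr rfl fun j hj => ?_
          rw [hA i hi, hv]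
          simp only [if_neg (Finset.mem_compl.mp hj)]
          ring
      rw [Finset.sum_congr rfl this, Finset.sum_add_distrib, hNdef]
      simp only
      rw [← Finset.mul_sum, ← Finset.mul_sum]
    have h1 := hblock S t hvS
    have h2 := hblock Sᶜ (-s) hvSc
    rw [h1, h2, hN_comm Sᶜ S, ← hEdef]
    ring
  have hnorm : v ⬝ᵥ v = s * t * (s + t) := by
    simp only [dotProduct]
    rw [← Finset.sum_add_sum_compl S]
    have hc1 : ∀ i ∈ S, v i * v i = t * t := fun i hi => by rw [hvS i hi]
    have hc2 : ∀ i ∈ Sᶜ, v i * v i = s * s := fun i hi => by rw [hvSc i hi]; ring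
    have h1 : ∑ i ∈ S, v i * v i = s * t^2 := by
      rw [Finset.sum_congr rfl hc1, Finset.sum_const, nsmul_eq_mul, ← hs]
      ring
    have h2 : ∑ i ∈ Sᶜ, v i * v i = t * s^2 := by
      rw [Finset.sum_congr rfl hc2, Finset.sum_const, nsmul_eq_mul, ← ht]
      ring
    rw [h1, h2]; ring
  have hray := rayleigh_bound G hreg lam2 hlam2 hld v hvsum
  rw [hQ, hnorm, hSS, hcc] at hray
  -- hray : t²(ds−E) − 2tsE + s²(dt−E) ≤ lam2 * (s t (s+t))
  -- i.e. d s t (s+t) − E (s+t)² ≤ lam2 s t (s+t)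
  have hkey : ((d:ℝ) - lam2) * s * t * (s + t) ≤ E * (s + t)^2 := by nlinarith
  have htn : (n:ℝ) / 2 ≤ t := by
    have : s ≤ (n:ℝ) / 2 := hShalf
    linarith [hst]
  have hd0 : (0:ℝ) ≤ (d:ℝ) - lam2 := by linarith
  rw [div_le_div_iff₀ (by norm_num) hspos, ← hE]
  -- goal : (d - lam2) * s ≤ E * 2
  rw [hst] at hkey
  have step1 : ((d:ℝ) - lam2) * s * ((n:ℝ)/2) ≤ ((d:ℝ) - lam2) * s * t :=
    mul_le_mul_of_nonneg_left htn (mul_nonneg hd0 hspos.le)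
  have step2 : ((d:ℝ) - lam2) * s * ((n:ℝ)/2) * (n:ℝ) ≤ E * (n:ℝ)^2 :=
    le_trans (mul_le_mul_of_nonneg_right step1 hnpos.le) hkey
  have hn2 : (0:ℝ) < (n:ℝ)^2 := by positivity
  nlinarith [step2, hn2]
end

section
/- Let G be a connected d-regular finite simple graph with adjacency matrix A and second largest eigenvalue λ_2. Then h(G) ≤ sqrt(2d(d - λ_2)). -/
open Finset

private lemma tele_sum (f : ℕ → ℝ) {a b : ℕ} (hab : a ≤ b) :
    ∑ k ∈ Finset.Ico a b, (f k - f (k + 1)) = f a - f b := by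
  induction b, hab using Nat.le_induction with
  | base => simp
  | succ b hab ih =>
      rw [Finset.sum_Ico_succ_top (by omega), ih]; ring

private lemma abel_sum (n : ℕ) (w : ℕ → ℝ) (hw : w n = 0) :
    ∑ k ∈ Finset.range n, w k
      = ∑ k ∈ Finset.range n, ((k : ℝ) + 1) * (w k - w (k + 1)) := by
  have h2 := Finset.sum_range_succ' (fun k => (k : ℝ) * w k) n
  have h3 : ∑ k ∈ Finset.range (n + 1), (k : ℝ) * w k
      = ∑ k ∈ Finset.range n, (k : ℝ) * w k := by
    rw [Finset.sum_range_succ, hw]; ring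
  rw [h3] at h2
  push_cast at h2
  have h4 : ∀ k : ℕ, ((k:ℝ)+1) * (w k - w (k+1))
      = ((k:ℝ) * w k + w k) - ((k:ℝ)+1) * w (k+1) := by intro k; ring
  simp only [h4]
  rw [Finset.sum_sub_distrib, Finset.sum_add_distrib]
  have h5 : ∑ k ∈ Finset.range n, ((k:ℝ)+1) * w (k+1)
      = ∑ k ∈ Finset.range n, (k:ℝ) * w k := by
    simp only [zero_mul, add_zero] at h2; linarith [h2]
  rw [h5]; ring

set_option maxHeartbeats 1000000 in
/-- for a connected `d`-regular finite simple graph `G` with second largest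
adjacency eigenvalue `λ₂`, the expansion ratio satisfies `h(G) ≤ √(2d(d - λ₂))`, i.e. some
nonempty vertex set `S` with `|S| ≤ n/2` satisfies `|∂S|/|S| ≤ √(2d(d - λ₂))`. -/
theorem stmt4 (n d : ℕ) (G : SimpleGraph (Fin n)) [DecidableRel G.Adj]
    (hconn : G.Connected) (hreg : G.IsRegularOfDegree d)
    (lam2 : ℝ) (hlam2 : IsSecondLargestEig (G.adjMatrix ℝ) lam2) :
    ∃ S : Finset (Fin n), S.Nonempty ∧ (S.card : ℝ) ≤ n / 2 ∧
      (eCount G S Sᶜ : ℝ) / S.card ≤ Real.sqrt (2 * d * ((d : ℝ) - lam2)) := by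
  classical
  by_contra hcon
  push_neg at hcon
  set c : ℝ := Real.sqrt (2 * d * ((d:ℝ) - lam2)) with hc
  obtain ⟨⟨v₀, hv0ne, hv0sum, hv0eig⟩, -⟩ := hlam2
  -- existence of positive entries for a nonzero zero-sum vector
  have hexP : ∀ (v : Fin n → ℝ), v ≠ 0 → (∑ i, v i) = 0 → ∃ u, 0 < v u := by
    intro v hne hsum
    by_contra hall
    push_neg at hall
    exact hne (funext fun u =>
      (Finset.sum_eq_zero_iff_of_nonpos (fun i _ => hall i)).1 hsum u (mem_univ u))
  set P0 : Finset (Fin n) := Finset.univ.filter (fun u => 0 < v₀ u) with hP0def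
  set N0 : Finset (Fin n) := Finset.univ.filter (fun u => 0 < (-v₀) u) with hN0def
  have hP0 : P0.Nonempty := by
    obtain ⟨u, hu⟩ := hexP v₀ hv0ne hv0sum
    exact ⟨u, by simp [hP0def, hu]⟩
  have hN0 : N0.Nonempty := by
    obtain ⟨u, hu⟩ := hexP (-v₀) (neg_ne_zero.2 hv0ne) (by simp [hv0sum])
    exact ⟨u, by simp only [hN0def, mem_filter, mem_univ, true_and]; exact hu⟩
  have hdisj : Disjoint P0 N0 := by
    rw [Finset.disjoint_left]
    intro a ha hb
    simp only [hP0def, hN0def, mem_filter, Pi.neg_apply] at ha hb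
    linarith [ha.2, hb.2]
  have hPN : P0.card + N0.card ≤ n := by
    calc P0.card + N0.card = (P0 ∪ N0).card := (Finset.card_union_of_disjoint hdisj).symm
    _ ≤ (Finset.univ : Finset (Fin n)).card := Finset.card_le_card (Finset.subset_univ _)
    _ = n := by simp
  obtain ⟨v, hveig, hPne, hPcard⟩ :
      ∃ v : Fin n → ℝ, (G.adjMatrix ℝ).mulVec v = lam2 • v ∧
        (Finset.univ.filter (fun u => 0 < v u)).Nonempty ∧
        2 * (Finset.univ.filter (fun u => 0 < v u)).card ≤ n := by
    rcases le_or_gt (2 * P0.card) n with h | h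
    · exact ⟨v₀, hv0eig, hP0, h⟩
    · refine ⟨-v₀, ?_, hN0, ?_⟩
      · rw [Matrix.mulVec_neg, hv0eig]
        ext u; simp
      · have hEq : (Finset.univ.filter (fun u => 0 < (-v₀) u)) = N0 := by
          ext u; simp [hN0def]
        rw [hEq]
        omega
  set P : Finset (Fin n) := Finset.univ.filter (fun u => 0 < v u) with hPdef
  set y : Fin n → ℝ := fun u => max (v u) 0 with hy
  set g : Fin n → ℝ := fun u => y u ^ 2 with hgdef
  have hy0 : ∀ u, 0 ≤ y u := fun u => le_max_right _ _
  have hg0 : ∀ u, 0 ≤ g u := fun u => sq_nonneg _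
  have hgP : ∀ u, 0 < g u ↔ 0 < v u := by
    intro u
    simp only [hgdef, hy]
    constructor
    · intro h
      by_contra h'
      push_neg at h'
      rw [max_eq_right h'] at h
      simp at h
    · intro h
      rw [max_eq_left h.le]
      positivity
  set E : ℝ := ∑ u, g u with hE
  have hEy : ∑ u, y u ^ 2 = E := by simp only [hE, hgdef]
  have hEpos : 0 < E := by
    obtain ⟨u₀, hu₀⟩ := hPne
    rw [Finset.mem_filter] at hu₀
    exact Finset.sum_pos' (fun u _ => hg0 u) ⟨u₀, mem_univ _, (hgP u₀).2 hu₀.2⟩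
  set EP : Finset (Fin n × Fin n) :=
    (Finset.univ ×ˢ Finset.univ).filter (fun p => G.Adj p.1 p.2) with hEPdef
  have hEPsum : ∀ f : Fin n × Fin n → ℝ,
      ∑ p ∈ EP, f p = ∑ u, ∑ x, if G.Adj u x then f (u, x) else 0 := by
    intro f
    rw [hEPdef, Finset.sum_filter, Finset.sum_product]
  have hdeg : ∀ u, (Finset.univ.filter (fun x => G.Adj u x)).card = d := by
    intro u
    have h1 := hreg u
    rw [SimpleGraph.degree, SimpleGraph.neighborFinset_eq_filter] at h1
    convert h1 using 2
  have hrow : ∀ f : Fin n → ℝ, ∑ p ∈ EP, f p.1 = (d : ℝ) * ∑ u, f u := by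
    intro f
    rw [hEPsum (fun p => f p.1)]
    have h1 : ∀ u : Fin n, ∑ x, (if G.Adj u x then f u else 0) = (d:ℝ) * f u := by
      intro u
      rw [← Finset.sum_filter, Finset.sum_const, nsmul_eq_mul, hdeg u]
    simp only [h1, ← Finset.mul_sum]
  have hcol : ∀ f : Fin n → ℝ, ∑ p ∈ EP, f p.2 = (d : ℝ) * ∑ u, f u := by
    intro f
    rw [hEPsum (fun p => f p.2), Finset.sum_comm]
    have h1 : ∀ x : Fin n, ∑ u, (if G.Adj u x then f x else 0) = (d:ℝ) * f x := by
      intro x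
      have hthis : ∀ u, (if G.Adj u x then f x else 0) = (if G.Adj x u then f x else 0) := by
        intro u; exact if_congr (G.adj_comm u x) rfl rfl
      simp only [hthis]
      rw [← Finset.sum_filter, Finset.sum_const, nsmul_eq_mul, hdeg x]
    simp only [h1, ← Finset.mul_sum]
  -- Rayleigh-type bound
  have hAy : ∀ u, lam2 * g u ≤ y u * ((G.adjMatrix ℝ).mulVec y u) := by
    intro u
    rcases le_or_gt (v u) 0 with h | h
    · have hyu : y u = 0 := by simp only [hy]; exact max_eq_right h
      simp [hgdef, hyu]
    · have hyu : y u = v u := by simp only [hy]; exact max_eq_left h.le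
      have h1 : (G.adjMatrix ℝ).mulVec v u ≤ (G.adjMatrix ℝ).mulVec y u := by
        simp only [Matrix.mulVec, dotProduct]
        apply Finset.sum_le_sum
        intro x _
        apply mul_le_mul_of_nonneg_left (le_max_left _ _)
        by_cases hadj : G.Adj u x <;> simp [SimpleGraph.adjMatrix_apply, hadj]
      have h2 : (G.adjMatrix ℝ).mulVec v u = lam2 * v u := by
        rw [hveig]; simp
      rw [h2] at h1
      calc lam2 * g u = y u * (lam2 * v u) := by simp only [hgdef]; rw [hyu]; ring
      _ ≤ y u * ((G.adjMatrix ℝ).mulVec y u) :=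
          mul_le_mul_of_nonneg_left h1 (hy0 u)
  have hmid : lam2 * E ≤ ∑ p ∈ EP, y p.1 * y p.2 := by
    have h1 : ∑ p ∈ EP, y p.1 * y p.2 = ∑ u, y u * ((G.adjMatrix ℝ).mulVec y u) := by
      rw [hEPsum (fun p => y p.1 * y p.2)]
      apply Finset.sum_congr rfl
      intro u _
      rw [SimpleGraph.adjMatrix_mulVec_apply, SimpleGraph.neighborFinset_eq_filter,
        Finset.sum_filter, Finset.mul_sum]
      apply Finset.sum_congr rfl
      intro x _
      by_cases hadj : G.Adj u x <;> simp [hadj]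
    rw [h1, hE, Finset.mul_sum]
    exact Finset.sum_le_sum (fun u _ => hAy u)
  have hsub : ∑ p ∈ EP, (y p.1 - y p.2) ^ 2 ≤ 2 * ((d:ℝ) - lam2) * E := by
    have expand : ∑ p ∈ EP, (y p.1 - y p.2) ^ 2
        = (∑ p ∈ EP, (y p.1) ^ 2) + (∑ p ∈ EP, (y p.2) ^ 2)
          - 2 * ∑ p ∈ EP, y p.1 * y p.2 := by
      rw [← Finset.sum_add_distrib, Finset.mul_sum, ← Finset.sum_sub_distrib]
      apply Finset.sum_congr rfl
      intros; ring
    rw [expand, hrow (fun u => y u ^ 2), hcol (fun u => y u ^ 2), hEy]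
    linarith [hmid]
  have hadd : ∑ p ∈ EP, (y p.1 + y p.2) ^ 2 ≤ 4 * (d:ℝ) * E := by
    have h1 : ∑ p ∈ EP, (y p.1 + y p.2) ^ 2
        ≤ ∑ p ∈ EP, (2 * (y p.1) ^ 2 + 2 * (y p.2) ^ 2) := by
      apply Finset.sum_le_sum
      intro p _
      nlinarith [sq_nonneg (y p.1 - y p.2)]
    have h2 : ∑ p ∈ EP, (2 * (y p.1) ^ 2 + 2 * (y p.2) ^ 2)
        = 2 * ((d:ℝ) * E) + 2 * ((d:ℝ) * E) := by
      rw [Finset.sum_add_distrib, ← Finset.mul_sum, ← Finset.mul_sum,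
        hrow (fun u => y u ^ 2), hcol (fun u => y u ^ 2), hEy]
    rw [h2] at h1
    linarith
  have hdl : (0:ℝ) ≤ (d:ℝ) - lam2 := by
    have h0 : (0:ℝ) ≤ ∑ p ∈ EP, (y p.1 - y p.2) ^ 2 :=
      Finset.sum_nonneg (fun p _ => sq_nonneg _)
    nlinarith [hsub, hEpos]
  have hc0 : (0:ℝ) ≤ 2 * (d:ℝ) * ((d:ℝ) - lam2) := by positivity
  -- Cauchy-Schwarz: total variation of g over edges
  have hT : ∑ p ∈ EP, |g p.1 - g p.2| ≤ c * (2 * E) := by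
    have habs : ∀ p : Fin n × Fin n, |g p.1 - g p.2| = |y p.1 - y p.2| * (y p.1 + y p.2) := by
      intro p
      have h1 : g p.1 - g p.2 = (y p.1 - y p.2) * (y p.1 + y p.2) := by
        simp only [hgdef]; ring
      rw [h1, abs_mul, abs_of_nonneg (by positivity : (0:ℝ) ≤ y p.1 + y p.2)]
    have hCS := Finset.sum_mul_sq_le_sq_mul_sq EP
      (fun p => |y p.1 - y p.2|) (fun p => y p.1 + y p.2)
    simp only [sq_abs] at hCS
    have hTnn : (0:ℝ) ≤ ∑ p ∈ EP, |g p.1 - g p.2| :=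
      Finset.sum_nonneg (fun p _ => abs_nonneg _)
    have hT2 : (∑ p ∈ EP, |g p.1 - g p.2|) ^ 2
        ≤ (2 * (d:ℝ) * ((d:ℝ) - lam2)) * (2 * E) ^ 2 := by
      calc (∑ p ∈ EP, |g p.1 - g p.2|) ^ 2
          = (∑ p ∈ EP, |y p.1 - y p.2| * (y p.1 + y p.2)) ^ 2 := by
            simp only [habs]
        _ ≤ (∑ p ∈ EP, (y p.1 - y p.2) ^ 2) * (∑ p ∈ EP, (y p.1 + y p.2) ^ 2) := hCS
        _ ≤ (2 * ((d:ℝ) - lam2) * E) * (4 * (d:ℝ) * E) := by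
            apply mul_le_mul hsub hadd
              (Finset.sum_nonneg (fun p _ => sq_nonneg _)) (by positivity)
        _ = (2 * (d:ℝ) * ((d:ℝ) - lam2)) * (2 * E) ^ 2 := by ring
    calc ∑ p ∈ EP, |g p.1 - g p.2|
        = Real.sqrt ((∑ p ∈ EP, |g p.1 - g p.2|) ^ 2) := (Real.sqrt_sq hTnn).symm
      _ ≤ Real.sqrt ((2 * (d:ℝ) * ((d:ℝ) - lam2)) * (2 * E) ^ 2) := Real.sqrt_le_sqrt hT2
      _ = c * (2 * E) := by
          rw [Real.sqrt_mul hc0, Real.sqrt_sq (by positivity)]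
  -- positive-part edge variation
  have hswap : ∑ p ∈ EP, max (g p.2 - g p.1) 0 = ∑ p ∈ EP, max (g p.1 - g p.2) 0 := by
    apply Finset.sum_nbij' (fun p => Prod.swap p) (fun p => Prod.swap p)
    · intro p hp
      simp only [hEPdef, Finset.mem_filter, Finset.mem_product] at hp ⊢
      exact ⟨⟨mem_univ _, mem_univ _⟩, hp.2.symm⟩
    · intro p hp
      simp only [hEPdef, Finset.mem_filter, Finset.mem_product] at hp ⊢
      exact ⟨⟨mem_univ _, mem_univ _⟩, hp.2.symm⟩
    · intro p _; simp
    · intro p _; simp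
    · intro p _; simp
  have hApos : ∑ p ∈ EP, max (g p.1 - g p.2) 0 ≤ c * E := by
    have h1 : ∀ x : ℝ, |x| = max x 0 + max (-x) 0 := by
      intro x
      rcases le_total x 0 with h | h
      · rw [abs_of_nonpos h, max_eq_right h, max_eq_left (by linarith)]; ring
      · rw [abs_of_nonneg h, max_eq_left h, max_eq_right (by linarith)]; ring
    have h2 : ∑ p ∈ EP, |g p.1 - g p.2|
        = (∑ p ∈ EP, max (g p.1 - g p.2) 0) + ∑ p ∈ EP, max (g p.2 - g p.1) 0 := by
      rw [← Finset.sum_add_distrib]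
      apply Finset.sum_congr rfl
      intro p _
      rw [h1 (g p.1 - g p.2), neg_sub]
    rw [h2, hswap] at hT
    linarith
  -- sorting
  set σ : Equiv.Perm (Fin n) := Tuple.sort (fun i => -g i) with hσ
  have hmono := Tuple.monotone_sort (fun i => -g i)
  have hanti : ∀ i j : Fin n, i ≤ j → g (σ j) ≤ g (σ i) := by
    intro i j hij
    have h := hmono hij
    simp only [Function.comp_apply, hσ] at h ⊢
    linarith [h]
  set w : ℕ → ℝ := fun k => if h : k < n then g (σ ⟨k, h⟩) else 0 with hwdef
  have hwn : ∀ k, n ≤ k → w k = 0 := by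
    intro k hk; simp only [hwdef]; rw [dif_neg (by omega)]
  have hw0 : ∀ k, 0 ≤ w k := by
    intro k; simp only [hwdef]; split
    · exact hg0 _
    · exact le_refl 0
  have hwstep : ∀ k, w (k + 1) ≤ w k := by
    intro k
    by_cases h1 : k + 1 < n
    · have h0 : k < n := by omega
      simp only [hwdef]
      rw [dif_pos h1, dif_pos h0]
      exact hanti ⟨k, h0⟩ ⟨k + 1, h1⟩ (by simp [Fin.le_def])
    · rw [hwn (k + 1) (by omega)]; exact hw0 k
  have hwanti : Antitone w := antitone_nat_of_succ_le hwstep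
  set rk : Fin n → ℕ := fun u => (σ.symm u : ℕ) with hrkdef
  have hrklt : ∀ u, rk u < n := fun u => (σ.symm u).isLt
  have hgrk : ∀ u, g u = w (rk u) := by
    intro u
    simp only [hwdef]
    rw [dif_pos (hrklt u)]
    have h1 : (⟨rk u, hrklt u⟩ : Fin n) = σ.symm u := by
      simp only [hrkdef]
    rw [h1, Equiv.apply_symm_apply]
  set S : ℕ → Finset (Fin n) := fun j => Finset.univ.filter (fun u => rk u < j) with hSdef
  have hScard : ∀ j, j ≤ n → (S j).card = j := by
    intro j hj
    simp only [hSdef]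
    rw [Finset.card_nbij (fun u => rk u)
      (fun a ha => by simp only [Finset.coe_filter, Finset.mem_coe, Finset.mem_filter, Set.mem_setOf_eq] at ha; exact Finset.mem_range.2 ha.2)
      ?_ ?_, Finset.card_range]
    · intro a ha b hb hab
      have : σ.symm a = σ.symm b := Fin.val_injective hab
      exact σ.symm.injective this
    · intro k hk
      simp only [Finset.coe_range, Set.mem_Iio] at hk
      have hkn : k < n := by omega
      refine ⟨σ ⟨k, hkn⟩, ?_, ?_⟩
      · simp only [Finset.coe_filter, Set.mem_setOf_eq, Finset.mem_univ, true_and, hrkdef,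
          Equiv.symm_apply_apply]
        exact hk
      · simp only [hrkdef, Equiv.symm_apply_apply]
  have hwposcard : ∀ k : ℕ, 0 < w k → k + 1 ≤ P.card := by
    intro k hk
    have hkn : k < n := by
      by_contra h
      rw [hwn k (by omega)] at hk
      exact lt_irrefl _ hk
    have hsub2 : S (k + 1) ⊆ P := by
      intro u hu
      simp only [hSdef, Finset.mem_filter] at hu
      have h1 : w k ≤ w (rk u) := hwanti (by omega : rk u ≤ k)
      have h2 : 0 < g u := by rw [hgrk]; linarith
      simp only [hPdef, Finset.mem_filter]
      exact ⟨mem_univ _, (hgP u).1 h2⟩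
    calc k + 1 = (S (k + 1)).card := (hScard _ (by omega)).symm
    _ ≤ P.card := Finset.card_le_card hsub2
  -- level decomposition of the positive part
  have hlevel : ∀ a b : Fin n, max (g a - g b) 0
      = ∑ k ∈ Finset.range n, if rk a ≤ k ∧ k < rk b then w k - w (k + 1) else 0 := by
    intro a b
    rcases le_or_gt (rk b) (rk a) with h | h
    · rw [Finset.sum_eq_zero (fun k _ => if_neg (by omega))]
      refine max_eq_right ?_
      rw [hgrk a, hgrk b]
      have := hwanti h
      linarith
    · have hfil : (Finset.range n).filter (fun k => rk a ≤ k ∧ k < rk b)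
          = Finset.Ico (rk a) (rk b) := by
        ext k
        simp only [Finset.mem_filter, Finset.mem_range, Finset.mem_Ico]
        have := hrklt b
        omega
      rw [← Finset.sum_filter, hfil, tele_sum w h.le, ← hgrk a, ← hgrk b]
      refine max_eq_left ?_
      rw [hgrk a, hgrk b]
      have := hwanti h.le
      linarith
  -- edge-boundary identity
  have hA_eq : ∑ p ∈ EP, max (g p.1 - g p.2) 0
      = ∑ k ∈ Finset.range n, (w k - w (k + 1)) * ((eCount G (S (k + 1)) (S (k + 1))ᶜ : ℕ) : ℝ) := by
    calc ∑ p ∈ EP, max (g p.1 - g p.2) 0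
        = ∑ p ∈ EP, ∑ k ∈ Finset.range n,
            (if rk p.1 ≤ k ∧ k < rk p.2 then w k - w (k + 1) else 0) :=
          Finset.sum_congr rfl (fun p _ => hlevel p.1 p.2)
      _ = ∑ k ∈ Finset.range n, ∑ p ∈ EP,
            (if rk p.1 ≤ k ∧ k < rk p.2 then w k - w (k + 1) else 0) := Finset.sum_comm
      _ = _ := by
          apply Finset.sum_congr rfl
          intro k _
          rw [← Finset.sum_filter, Finset.sum_const, nsmul_eq_mul, mul_comm]
          congr 1
          have hsets : EP.filter (fun p => rk p.1 ≤ k ∧ k < rk p.2)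
              = ((S (k + 1)) ×ˢ (S (k + 1))ᶜ).filter (fun p => G.Adj p.1 p.2) := by
            ext p
            simp only [hEPdef, hSdef, Finset.mem_filter, Finset.mem_product, Finset.mem_univ,
              Finset.mem_compl, true_and, not_lt]
            constructor
            · rintro ⟨hadj, h1, h2⟩
              exact ⟨⟨by omega, by omega⟩, hadj⟩
            · rintro ⟨⟨h1, h2⟩, hadj⟩
              exact ⟨hadj, by omega, by omega⟩
          rw [hsets]
          rfl
  -- mass identity
  have hmass : E = ∑ k ∈ Finset.range n, ((k : ℝ) + 1) * (w k - w (k + 1)) := by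
    have h1 : E = ∑ k ∈ Finset.range n, w k := by
      rw [hE, ← Equiv.sum_comp σ g]
      have h2 : ∀ i : Fin n, g (σ i) = w (i : ℕ) := by
        intro i
        simp only [hwdef]
        rw [dif_pos i.isLt]
      simp only [h2]
      exact Fin.sum_univ_eq_sum_range (fun k => w k) n
    rw [h1, abel_sum n w (hwn n le_rfl)]
  -- final contradiction
  have hstrict : c * E < ∑ p ∈ EP, max (g p.1 - g p.2) 0 := by
    have hEexp : c * E = ∑ k ∈ Finset.range n, c * (((k : ℝ) + 1) * (w k - w (k + 1))) := by
      rw [hmass, Finset.mul_sum]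
    rw [hEexp, hA_eq]
    have key : ∀ k ∈ Finset.range n, 0 < w k - w (k + 1) →
        c * ((k : ℝ) + 1) < ((eCount G (S (k + 1)) (S (k + 1))ᶜ : ℕ) : ℝ) := by
      intro k hk hδ
      have hwk : 0 < w k := by linarith [hw0 (k + 1)]
      have hcardP := hwposcard k hwk
      have hkn : k + 1 ≤ n := Finset.mem_range.1 hk
      have hScard' : ((S (k + 1)).card : ℝ) = (k : ℝ) + 1 := by
        rw [hScard (k + 1) hkn]; push_cast; ring
      have hne2 : (S (k + 1)).Nonempty := by
        rw [← Finset.card_pos, hScard (k + 1) hkn]; omega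
      have hhalf : ((S (k + 1)).card : ℝ) ≤ (n : ℝ) / 2 := by
        rw [hScard']
        have h2 : 2 * (k + 1) ≤ n := by omega
        have h3 : (2 : ℝ) * ((k : ℝ) + 1) ≤ (n : ℝ) := by exact_mod_cast h2
        linarith
      have h4 := hcon (S (k + 1)) hne2 hhalf
      rw [lt_div_iff₀ (by rw [hScard']; positivity)] at h4
      calc c * ((k : ℝ) + 1) = c * ((S (k + 1)).card : ℝ) := by rw [hScard']
      _ < _ := h4
    apply Finset.sum_lt_sum
    · intro k hk
      rcases lt_or_ge 0 (w k - w (k + 1)) with hδ | hδ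
      · have := key k hk hδ
        nlinarith
      · have hδ0 : w k - w (k + 1) = 0 := le_antisymm hδ (by linarith [hwstep k])
        rw [hδ0]; simp
    · have hex : ∃ k ∈ Finset.range n, 0 < w k - w (k + 1) := by
        by_contra hno
        push_neg at hno
        have hE0 : E ≤ 0 := by
          rw [hmass]
          apply Finset.sum_nonpos
          intro k hk
          have h1 := hno k hk
          have h2 : (0 : ℝ) ≤ (k : ℝ) + 1 := by positivity
          nlinarith
        linarith
      obtain ⟨k, hk, hδ⟩ := hex
      refine ⟨k, hk, ?_⟩
      have := key k hk hδ
      nlinarith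
  linarith [hApos, hstrict]
end

section
/- (Expander Mixing Lemma) Let G be a d-regular graph on n vertices with adjacency eigenvalues d = λ_1 ≥ λ_2 ≥ ... ≥ λ_n, and set λ = max(|λ_2|, |λ_n|). Then for all vertex subsets S, T: | e(S,T) − (d/n)|S||T| | ≤ λ·sqrt(|S|·|T|). -/
/-- `lam = max(|λ₂|, |λₙ|)` for the symmetric matrix `A` of a `d`-regular graph: the largest
absolute value of an eigenvalue attained by an eigenvector orthogonal to the all-ones vector. -/
def IsSecondEigAbsMax {n : ℕ} (A : Matrix (Fin n) (Fin n) ℝ) (lam : ℝ) : Prop :=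
  (∃ (μ : ℝ) (v : Fin n → ℝ), v ≠ 0 ∧ (∑ i, v i) = 0 ∧ A.mulVec v = μ • v ∧ |μ| = lam) ∧
    ∀ (μ : ℝ) (v : Fin n → ℝ), v ≠ 0 → (∑ i, v i) = 0 → A.mulVec v = μ • v → |μ| ≤ lam

open Finset Matrix
open scoped InnerProductSpace

/-- The sum-of-coordinates functional on Euclidean space. -/
noncomputable def sumFun (n : ℕ) : EuclideanSpace ℝ (Fin n) →ₗ[ℝ] ℝ where
  toFun v := ∑ i, v i
  map_add' x y := by simp [Finset.sum_add_distrib]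
  map_smul' c x := by simp [Finset.mul_sum]

lemma sum_ind {n : ℕ} {M : Type*} [AddCommMonoid M] (S : Finset (Fin n)) (f : Fin n → M) :
    ∑ x, (if x ∈ S then f x else 0) = ∑ x ∈ S, f x := by
  rw [← Finset.sum_filter, Finset.filter_mem_eq_inter, Finset.univ_inter]

set_option maxHeartbeats 1000000 in
/-- Spectral bound: if all eigenvalues supported on the orthocomplement of the all-ones vector
are at most `lam` in absolute value, then the quadratic form is bounded there. -/
lemma spec_bound {n : ℕ} (A : Matrix (Fin n) (Fin n) ℝ) (hA : A.IsHermitian)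
    (hinv : ∀ v : Fin n → ℝ, (∑ i, v i) = 0 → (∑ i, (A *ᵥ v) i) = 0)
    (lam : ℝ) (hlam0 : 0 ≤ lam)
    (hb : ∀ (μ : ℝ) (v : Fin n → ℝ), v ≠ 0 → (∑ i, v i) = 0 → A.mulVec v = μ • v → |μ| ≤ lam)
    (s t : Fin n → ℝ) (hs : (∑ i, s i) = 0) (ht : (∑ i, t i) = 0) :
    |s ⬝ᵥ (A *ᵥ t)| ≤ lam * Real.sqrt (∑ i, s i ^ 2) * Real.sqrt (∑ i, t i ^ 2) := by
  set sE : EuclideanSpace ℝ (Fin n) := (WithLp.equiv 2 (Fin n → ℝ)).symm s with hsEdef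
  set tE : EuclideanSpace ℝ (Fin n) := (WithLp.equiv 2 (Fin n → ℝ)).symm t with htEdef
  set T := Matrix.toEuclideanLin A with hTdef
  have hT : T.IsSymmetric := Matrix.isHermitian_iff_isSymmetric.mp hA
  set W : Submodule ℝ (EuclideanSpace ℝ (Fin n)) := LinearMap.ker (sumFun n) with hWdef
  have hmem : ∀ v : EuclideanSpace ℝ (Fin n), v ∈ W ↔ (∑ i, v i) = 0 := by
    intro v; simp [hWdef, LinearMap.mem_ker, sumFun]
  have hWinv : ∀ v ∈ W, T v ∈ W := by
    intro v hv
    rw [hmem] at hv ⊢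
    exact hinv v hv
  set T' := T.restrict hWinv with hT'def
  have hT' : T'.IsSymmetric := hT.restrict_invariant hWinv
  set b := hT'.eigenvectorBasis rfl with hbdef
  set μ := hT'.eigenvalues rfl with hμdef
  have hμle : ∀ i, |μ i| ≤ lam := by
    intro i
    have heig := hT'.apply_eigenvectorBasis rfl i
    rw [← hbdef, ← hμdef] at heig
    have hne : (b i : EuclideanSpace ℝ (Fin n)) ≠ 0 := by
      intro h
      have := b.toBasis.ne_zero i
      simp only [OrthonormalBasis.coe_toBasis] at this
      exact this (Subtype.ext h)
    refine hb (μ i) (b i) (by simpa using hne) ((hmem _).mp (b i).2) ?_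
    exact congrArg (fun x : W => (x : EuclideanSpace ℝ (Fin n)).ofLp) heig
  have hsW : sE ∈ W := (hmem sE).mpr hs
  have htW : tE ∈ W := (hmem tE).mpr ht
  set sW : W := ⟨sE, hsW⟩ with hsWdef
  set tW : W := ⟨tE, htW⟩ with htWdef
  have hdot : s ⬝ᵥ (A *ᵥ t) = ⟪sW, T' tW⟫_ℝ := by
    show s ⬝ᵥ (A *ᵥ t) = ⟪sE, T tE⟫_ℝ
    rw [PiLp.inner_apply]
    simp only [RCLike.inner_apply, conj_trivial]
    exact Finset.sum_congr rfl fun i _ => mul_comm _ _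
  have hrepr : ⟪sW, T' tW⟫_ℝ = ∑ i, (b.repr sW i) * (μ i * b.repr tW i) := by
    rw [← b.repr.inner_map_map sW (T' tW), PiLp.inner_apply]
    simp only [RCLike.inner_apply, conj_trivial]
    refine Finset.sum_congr rfl fun i _ => ?_
    have := hT'.eigenvectorBasis_apply_self_apply rfl tW i
    rw [← hbdef, ← hμdef] at this
    rw [this]
    norm_num
    ring
  have hnormS : Real.sqrt (∑ i, |b.repr sW i| ^ 2) = Real.sqrt (∑ i, s i ^ 2) := by
    have h1 : ‖b.repr sW‖ = ‖sW‖ := b.repr.norm_map sW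
    rw [EuclideanSpace.norm_eq] at h1
    simp only [Real.norm_eq_abs] at h1
    rw [h1]
    have h2 : ‖sW‖ = ‖sE‖ := rfl
    rw [h2, EuclideanSpace.norm_eq]
    congr 1
    refine Finset.sum_congr rfl fun i _ => ?_
    rw [Real.norm_eq_abs, sq_abs]
    rfl
  have hnormT : Real.sqrt (∑ i, |b.repr tW i| ^ 2) = Real.sqrt (∑ i, t i ^ 2) := by
    have h1 : ‖b.repr tW‖ = ‖tW‖ := b.repr.norm_map tW
    rw [EuclideanSpace.norm_eq] at h1
    simp only [Real.norm_eq_abs] at h1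
    rw [h1]
    have h2 : ‖tW‖ = ‖tE‖ := rfl
    rw [h2, EuclideanSpace.norm_eq]
    congr 1
    refine Finset.sum_congr rfl fun i _ => ?_
    rw [Real.norm_eq_abs, sq_abs]
    rfl
  have h1 : |∑ i, (b.repr sW i) * (μ i * b.repr tW i)| ≤
      ∑ i, lam * (|b.repr sW i| * |b.repr tW i|) := by
    refine (Finset.abs_sum_le_sum_abs _ _).trans (Finset.sum_le_sum fun i _ => ?_)
    rw [abs_mul, abs_mul]
    calc |b.repr sW i| * (|μ i| * |b.repr tW i|)
        ≤ |b.repr sW i| * (lam * |b.repr tW i|) :=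
          mul_le_mul_of_nonneg_left
            (mul_le_mul_of_nonneg_right (hμle i) (abs_nonneg _)) (abs_nonneg _)
      _ = lam * (|b.repr sW i| * |b.repr tW i|) := by ring
  rw [← Finset.mul_sum] at h1
  have h2 : ∑ i, |b.repr sW i| * |b.repr tW i|
      ≤ Real.sqrt (∑ i, s i ^ 2) * Real.sqrt (∑ i, t i ^ 2) := by
    calc ∑ i, |b.repr sW i| * |b.repr tW i|
        ≤ Real.sqrt (∑ i, |b.repr sW i| ^ 2) * Real.sqrt (∑ i, |b.repr tW i| ^ 2) :=
          Real.sum_mul_le_sqrt_mul_sqrt _ _ _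
      _ = Real.sqrt (∑ i, s i ^ 2) * Real.sqrt (∑ i, t i ^ 2) := by rw [hnormS, hnormT]
  rw [hdot, hrepr]
  calc |∑ i, (b.repr sW i) * (μ i * b.repr tW i)|
      ≤ lam * ∑ i, |b.repr sW i| * |b.repr tW i| := h1
    _ ≤ lam * (Real.sqrt (∑ i, s i ^ 2) * Real.sqrt (∑ i, t i ^ 2)) :=
        mul_le_mul_of_nonneg_left h2 hlam0
    _ = lam * Real.sqrt (∑ i, s i ^ 2) * Real.sqrt (∑ i, t i ^ 2) := by ring

set_option maxHeartbeats 2000000 in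
/-- Expander Mixing Lemma: for a `d`-regular graph `G` on `n` vertices with
`λ = max(|λ₂|, |λₙ|)` and any vertex subsets `S, T`,
`| e(S,T) − (d/n)|S||T| | ≤ λ·√(|S|·|T|)`. -/
theorem stmt5 (n d : ℕ) (G : SimpleGraph (Fin n)) [DecidableRel G.Adj]
    (hreg : G.IsRegularOfDegree d)
    (lam : ℝ) (hlam : IsSecondEigAbsMax (G.adjMatrix ℝ) lam)
    (S T : Finset (Fin n)) :
    |(eCount G S T : ℝ) - (d : ℝ) / n * S.card * T.card| ≤
      lam * Real.sqrt ((S.card : ℝ) * T.card) := by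
  obtain ⟨⟨μ₀, v₀, hv0, hsum0, heig0, habs0⟩, hbound⟩ := hlam
  have hlam0 : 0 ≤ lam := habs0 ▸ abs_nonneg μ₀
  rcases Nat.eq_zero_or_pos n with hn0 | hn
  · subst hn0
    exact absurd (funext fun i => i.elim0) hv0
  have hnR : (0:ℝ) < n := by exact_mod_cast hn
  set A := G.adjMatrix ℝ with hAdef
  have hA : A.IsHermitian := by
    show Aᴴ = A
    ext i j
    simp [A, Matrix.conjTranspose_apply, SimpleGraph.adjMatrix_apply, G.adj_comm i j]
  set χS : Fin n → ℝ := fun i => if i ∈ S then 1 else 0 with hχSdef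
  set χT : Fin n → ℝ := fun i => if i ∈ T then 1 else 0 with hχTdef
  have hχS : ∑ i, χS i = S.card := by simp [hχSdef, Finset.sum_ite_mem]
  have hχT : ∑ i, χT i = T.card := by simp [hχTdef, Finset.sum_ite_mem]
  have hrow : ∀ i, ∑ j, A i j = (d:ℝ) := by
    intro i
    have hc : (Finset.univ.filter (fun x => G.Adj i x)).card = d := by
      rw [← SimpleGraph.neighborFinset_eq_filter]; exact hreg i
    simp only [hAdef, SimpleGraph.adjMatrix_apply, Finset.sum_boole, hc]
  have hcol : ∀ j, ∑ i, A i j = (d:ℝ) := by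
    intro j
    have : ∀ i, A i j = A j i := by
      intro i; simp [A, SimpleGraph.adjMatrix_apply, G.adj_comm]
    simp only [this]; exact hrow j
  have hinv : ∀ v : Fin n → ℝ, (∑ i, v i) = 0 → (∑ i, (A *ᵥ v) i) = 0 := by
    intro v hv
    have h1 : ∑ i, (A *ᵥ v) i = ∑ j, (∑ i, A i j) * v j := by
      simp only [Matrix.mulVec, dotProduct]
      rw [Finset.sum_comm]
      simp [Finset.sum_mul]
    rw [h1]
    simp only [hcol]
    rw [← Finset.mul_sum, hv, mul_zero]
  set α : ℝ := S.card / n with hαdef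
  set β : ℝ := T.card / n with hβdef
  set sv : Fin n → ℝ := fun i => χS i - α with hsvdef
  set tv : Fin n → ℝ := fun i => χT i - β with htvdef
  have hssum : ∑ i, sv i = 0 := by
    simp only [hsvdef, Finset.sum_sub_distrib, hχS, Finset.sum_const, card_univ,
      Fintype.card_fin, nsmul_eq_mul, hαdef]
    field_simp
    ring
  have htsum : ∑ i, tv i = 0 := by
    simp only [htvdef, Finset.sum_sub_distrib, hχT, Finset.sum_const, card_univ,
      Fintype.card_fin, nsmul_eq_mul, hβdef]
    field_simp
    ring
  -- e(S,T) as a bilinear form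
  have hE : (eCount G S T : ℝ) = χS ⬝ᵥ (A *ᵥ χT) := by
    rw [hAdef, SimpleGraph.dotProduct_mulVec_adjMatrix]
    have step : ∀ i j, (if G.Adj i j then χS i * χT j else 0)
        = (if i ∈ S then (if j ∈ T then (if G.Adj i j then (1:ℝ) else 0) else 0) else 0) := by
      intro i j
      simp only [hχSdef, hχTdef]
      split_ifs <;> simp
    simp only [step]
    rw [eCount, Finset.card_filter]
    push_cast
    rw [Finset.sum_product]
    symm
    have step2 : ∀ x : Fin n,
        (∑ y : Fin n, if x ∈ S then (if y ∈ T then (if G.Adj x y then (1:ℝ) else 0) else 0) else 0)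
        = if x ∈ S then (∑ y : Fin n, if y ∈ T then (if G.Adj x y then (1:ℝ) else 0) else 0)
          else 0 := by
      intro x
      split_ifs with h
      · rfl
      · simp
    simp only [step2, sum_ind]
  -- decomposition
  have hmain : χS ⬝ᵥ (A *ᵥ χT) = sv ⬝ᵥ (A *ᵥ tv) + (d:ℝ) / n * S.card * T.card := by
    have hχTeq : χT = tv + Function.const _ β := by
      funext i; simp [htvdef]
    have hχSeq : χS = sv + Function.const _ α := by
      funext i; simp [hsvdef]
    have hconst : A *ᵥ Function.const _ β = Function.const _ ((d:ℝ) * β) := by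
      funext i
      exact SimpleGraph.adjMatrix_mulVec_const_apply_of_regular hreg
    rw [hχTeq, Matrix.mulVec_add, hχSeq, hconst, add_dotProduct]
    have h1 : Function.const (Fin n) α ⬝ᵥ (A *ᵥ tv) = 0 := by
      simp only [dotProduct, Function.const_apply]
      rw [← Finset.mul_sum, hinv tv htsum, mul_zero]
    have h2 : sv ⬝ᵥ Function.const (Fin n) ((d:ℝ) * β) = 0 := by
      simp only [dotProduct, Function.const_apply]
      rw [← Finset.sum_mul, hssum, zero_mul]
    have h3 : Function.const (Fin n) α ⬝ᵥ Function.const (Fin n) ((d:ℝ) * β)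
        = (d:ℝ) / n * S.card * T.card := by
      simp only [dotProduct, Function.const_apply, Finset.sum_const, card_univ,
        Fintype.card_fin, nsmul_eq_mul]
      rw [hαdef, hβdef]
      field_simp
    rw [dotProduct_add, dotProduct_add, h1, h2, h3]
    ring
  -- norm bounds
  have hχS2 : ∀ i, χS i ^ 2 = χS i := by
    intro i; simp only [hχSdef]; split_ifs <;> norm_num
  have hχT2 : ∀ i, χT i ^ 2 = χT i := by
    intro i; simp only [hχTdef]; split_ifs <;> norm_num
  have hnormS : Real.sqrt (∑ i, sv i ^ 2) ≤ Real.sqrt S.card := by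
    apply Real.sqrt_le_sqrt
    have expand : ∀ i : Fin n, sv i ^ 2 = χS i - 2*α*χS i + α^2 := by
      intro i
      have hbeta : sv i = χS i - α := rfl
      rw [hbeta]
      nlinarith [hχS2 i]
    calc ∑ i, sv i ^2 = ∑ i : Fin n, (χS i - 2*α*χS i + α^2) :=
          Finset.sum_congr rfl fun i _ => expand i
      _ = S.card - 2*α*S.card + n*α^2 := by
          rw [Finset.sum_add_distrib, Finset.sum_sub_distrib, hχS, ← Finset.mul_sum, hχS,
            Finset.sum_const, card_univ, Fintype.card_fin, nsmul_eq_mul]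
      _ ≤ S.card := by
          have hkey : (S.card:ℝ) - 2*((S.card:ℝ)/n)*S.card + n*((S.card:ℝ)/n)^2
              = S.card - (S.card:ℝ)^2/n := by
            field_simp
            ring
          rw [hαdef, hkey]
          have : 0 ≤ (S.card:ℝ)^2/n := by positivity
          linarith
  have hnormT : Real.sqrt (∑ i, tv i ^ 2) ≤ Real.sqrt T.card := by
    apply Real.sqrt_le_sqrt
    have expand : ∀ i : Fin n, tv i ^ 2 = χT i - 2*β*χT i + β^2 := by
      intro i
      have hbeta : tv i = χT i - β := rfl
      rw [hbeta]
      nlinarith [hχT2 i]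
    calc ∑ i, tv i ^2 = ∑ i : Fin n, (χT i - 2*β*χT i + β^2) :=
          Finset.sum_congr rfl fun i _ => expand i
      _ = T.card - 2*β*T.card + n*β^2 := by
          rw [Finset.sum_add_distrib, Finset.sum_sub_distrib, hχT, ← Finset.mul_sum, hχT,
            Finset.sum_const, card_univ, Fintype.card_fin, nsmul_eq_mul]
      _ ≤ T.card := by
          have hkey : (T.card:ℝ) - 2*((T.card:ℝ)/n)*T.card + n*((T.card:ℝ)/n)^2
              = T.card - (T.card:ℝ)^2/n := by
            field_simp
            ring
          rw [hβdef, hkey]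
          have : 0 ≤ (T.card:ℝ)^2/n := by positivity
          linarith
  -- assemble
  have hdiff : (eCount G S T : ℝ) - (d:ℝ)/n * S.card * T.card = sv ⬝ᵥ (A *ᵥ tv) := by
    rw [hE, hmain]; ring
  rw [hdiff]
  have hspec := spec_bound A hA hinv lam hlam0 hbound sv tv hssum htsum
  calc |sv ⬝ᵥ (A *ᵥ tv)|
      ≤ lam * Real.sqrt (∑ i, sv i ^ 2) * Real.sqrt (∑ i, tv i ^ 2) := hspec
    _ ≤ lam * Real.sqrt S.card * Real.sqrt T.card := by
        have h1 : (0:ℝ) ≤ Real.sqrt (∑ i, sv i ^ 2) := Real.sqrt_nonneg _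
        have h2 : (0:ℝ) ≤ Real.sqrt (∑ i, tv i ^ 2) := Real.sqrt_nonneg _
        gcongr
    _ = lam * Real.sqrt ((S.card : ℝ) * T.card) := by
        rw [Real.sqrt_mul (by positivity)]
        ring
end
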